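/- If every prohibited set F_i with smaller position (in the stabilized permutation) than that of some infinitely-visited prohibited set is itself visited infinitely often, and a transition visiting I_n infinitely often has F_n visited only finitely often, then the position of pair n eventually exceeds the position of every infinitely often visited prohibited set. Formally: in the move-to-front record, if the index n is moved only finitely often while indices in a set A ⊆ Fin k are each moved infinitely often, then eventually π_t⁻¹(a) < π_t⁻¹(n) for all a ∈ A simultaneously. -/

import Mathlib

open List

lemma indexOf_filter_mono {α : Type*} [DecidableEq α] (p : α → Bool) :
    ∀ l : List α, ∀ x y : α, x ∈ l → y ∈ l → p x = true → p y = true →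
      l.idxOf x < l.idxOf y → (l.filter p).idxOf x < (l.filter p).idxOf y := by
  intro l
  induction l with
  | nil => simp
  | cons a l ih =>
    intro x y hx hy hpx hpy hlt
    by_cases hax : a = x
    · have hay : a ≠ y := by
        rintro rfl
        rw [idxOf_cons_self] at hlt
        exact absurd hlt (Nat.not_lt_zero _)
      rw [filter_cons_of_pos (hax ▸ hpx), idxOf_cons_eq _ hax, idxOf_cons_ne _ hay]
      exact Nat.succ_pos _
    · by_cases hay : a = y
      · rw [idxOf_cons_eq _ hay] at hlt
        exact absurd hlt (Nat.not_lt_zero _)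
      · rw [idxOf_cons_ne _ hax, idxOf_cons_ne _ hay] at hlt
        have hx' : x ∈ l := by
          rcases mem_cons.mp hx with h | h
          · exact absurd h.symm hax
          · exact h
        have hy' : y ∈ l := by
          rcases mem_cons.mp hy with h | h
          · exact absurd h.symm hay
          · exact h
        have := ih x y hx' hy' hpx hpy (Nat.lt_of_succ_lt_succ hlt)
        by_cases hpa : p a = true
        · rw [filter_cons_of_pos hpa, idxOf_cons_ne _ hax, idxOf_cons_ne _ hay]
          exact Nat.succ_lt_succ this
        · rw [filter_cons_of_neg (by simpa using hpa)]
          exact this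

lemma indexOf_eq_of_get {α : Type*} [DecidableEq α] {l : List α} (hnd : l.Nodup) {i : ℕ}
    (hi : i < l.length) {x : α} (h : l.get ⟨i, hi⟩ = x) : l.idxOf x = i := by
  have hx : x ∈ l := h ▸ l.get_mem _
  have h2 : l.get ⟨l.idxOf x, idxOf_lt_length_iff.2 hx⟩ = x := idxOf_get _
  have h3 := List.nodup_iff_injective_get.mp hnd (h2.trans h.symm)
  simpa using h3

/-- Move-to-front update: the indices in `M` are moved to the front positions
(preserving their relative order in `π`), all other indices are shifted right
preserving their relative order. -/
noncomputable def moveToFront {k : ℕ} (π : Equiv.Perm (Fin k)) (M : Finset (Fin k)) :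
    Equiv.Perm (Fin k) :=
  let L : List (Fin k) :=
    ((List.finRange k).map π).filter (fun x => decide (x ∈ M)) ++
      ((List.finRange k).map π).filter (fun x => !decide (x ∈ M))
  have hperm : List.Perm L ((List.finRange k).map π) :=
    List.filter_append_perm _ _
  have hnodup : L.Nodup :=
    hperm.nodup_iff.mpr ((List.nodup_finRange k).map π.injective)
  have hlen : L.length = k := by
    simpa using hperm.length_eq
  Equiv.ofBijective (fun j => L.get (Fin.cast hlen.symm j))
    (Finite.injective_iff_bijective.mp
      (fun a b hab => by
        have := (List.nodup_iff_injective_get.mp hnodup) hab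
        exact Fin.cast_injective _ this))

/-- The move-to-front record: `π (t+1)` is obtained from `π t` by moving the
indices in `M t` to the front. -/
noncomputable def mtfSeq {k : ℕ} (π0 : Equiv.Perm (Fin k)) (M : ℕ → Finset (Fin k)) :
    ℕ → Equiv.Perm (Fin k) :=
  fun t => Nat.rec π0 (fun s p => moveToFront p (M s)) t

/-- The underlying list of the move-to-front update. -/
def mtfList {k : ℕ} (π : Equiv.Perm (Fin k)) (M : Finset (Fin k)) : List (Fin k) :=
  ((List.finRange k).map π).filter (fun x => decide (x ∈ M)) ++
    ((List.finRange k).map π).filter (fun x => !decide (x ∈ M))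

lemma mtfList_perm {k : ℕ} (π : Equiv.Perm (Fin k)) (M : Finset (Fin k)) :
    (mtfList π M).Perm ((List.finRange k).map π) :=
  List.filter_append_perm _ _

lemma baseList_nodup {k : ℕ} (π : Equiv.Perm (Fin k)) :
    ((List.finRange k).map π).Nodup :=
  (List.nodup_finRange k).map π.injective

lemma mtfList_nodup {k : ℕ} (π : Equiv.Perm (Fin k)) (M : Finset (Fin k)) :
    (mtfList π M).Nodup :=
  (mtfList_perm π M).nodup_iff.mpr (baseList_nodup π)

lemma mtfList_length {k : ℕ} (π : Equiv.Perm (Fin k)) (M : Finset (Fin k)) :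
    (mtfList π M).length = k := by
  simpa using (mtfList_perm π M).length_eq

lemma mem_baseList {k : ℕ} (π : Equiv.Perm (Fin k)) (x : Fin k) :
    x ∈ (List.finRange k).map π := by
  simpa using ⟨π⁻¹ x, by simp⟩

lemma mem_mtfList {k : ℕ} (π : Equiv.Perm (Fin k)) (M : Finset (Fin k)) (x : Fin k) :
    x ∈ mtfList π M :=
  (mtfList_perm π M).mem_iff.mpr (mem_baseList π x)

lemma moveToFront_apply {k : ℕ} (π : Equiv.Perm (Fin k)) (M : Finset (Fin k)) (j : Fin k) :
    moveToFront π M j = (mtfList π M).get (Fin.cast (mtfList_length π M).symm j) := rfl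

lemma baseList_indexOf {k : ℕ} (π : Equiv.Perm (Fin k)) (x : Fin k) :
    ((List.finRange k).map π).idxOf x = ((π⁻¹ x : Fin k) : ℕ) := by
  refine indexOf_eq_of_get (baseList_nodup π) (by simp) ?_
  simp

lemma moveToFront_inv_coe {k : ℕ} (π : Equiv.Perm (Fin k)) (M : Finset (Fin k)) (x : Fin k) :
    (((moveToFront π M)⁻¹ x : Fin k) : ℕ) = (mtfList π M).idxOf x := by
  refine (indexOf_eq_of_get (mtfList_nodup π M)
    (by rw [mtfList_length]; exact ((moveToFront π M)⁻¹ x).isLt) ?_).symm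
  have h1 : moveToFront π M ((moveToFront π M)⁻¹ x) = x := Equiv.apply_symm_apply _ _
  exact (moveToFront_apply π M _).symm.trans h1

/-- If `a` is moved and `x` is not, then `a` ends strictly before `x`. -/
lemma moveToFront_lt_of_mem {k : ℕ} (π : Equiv.Perm (Fin k)) (M : Finset (Fin k))
    {a x : Fin k} (ha : a ∈ M) (hx : x ∉ M) :
    (((moveToFront π M)⁻¹ a : Fin k) : ℕ) < (((moveToFront π M)⁻¹ x : Fin k) : ℕ) := by
  rw [moveToFront_inv_coe, moveToFront_inv_coe]
  unfold mtfList
  set L1 := ((List.finRange k).map π).filter (fun x => decide (x ∈ M)) with hL1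
  set L2 := ((List.finRange k).map π).filter (fun x => !decide (x ∈ M)) with hL2
  have haL1 : a ∈ L1 := by
    rw [hL1, List.mem_filter]
    exact ⟨mem_baseList π a, by simpa using ha⟩
  have hxL1 : x ∉ L1 := by
    rw [hL1, List.mem_filter]
    push_neg
    intro _
    simpa using hx
  rw [idxOf_append_of_mem haL1, idxOf_append_of_notMem hxL1]
  calc L1.idxOf a < L1.length := idxOf_lt_length_iff.2 haL1
    _ ≤ L1.length + L2.idxOf x := Nat.le_add_right _ _

/-- If neither `a` nor `x` is moved, their relative order is preserved. -/
lemma moveToFront_lt_of_not_mem {k : ℕ} (π : Equiv.Perm (Fin k)) (M : Finset (Fin k))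
    {a x : Fin k} (ha : a ∉ M) (hx : x ∉ M)
    (h : ((π⁻¹ a : Fin k) : ℕ) < ((π⁻¹ x : Fin k) : ℕ)) :
    (((moveToFront π M)⁻¹ a : Fin k) : ℕ) < (((moveToFront π M)⁻¹ x : Fin k) : ℕ) := by
  rw [moveToFront_inv_coe, moveToFront_inv_coe]
  unfold mtfList
  set L1 := ((List.finRange k).map π).filter (fun x => decide (x ∈ M)) with hL1
  set L2 := ((List.finRange k).map π).filter (fun x => !decide (x ∈ M)) with hL2
  have haL1 : a ∉ L1 := by
    rw [hL1, List.mem_filter]; push_neg; intro _; simpa using ha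
  have hxL1 : x ∉ L1 := by
    rw [hL1, List.mem_filter]; push_neg; intro _; simpa using hx
  rw [idxOf_append_of_notMem haL1, idxOf_append_of_notMem hxL1]
  have := indexOf_filter_mono (fun x => !decide (x ∈ M)) ((List.finRange k).map π) a x
    (mem_baseList π a) (mem_baseList π x) (by simpa using ha) (by simpa using hx)
    (by rwa [baseList_indexOf, baseList_indexOf])
  rw [← hL2] at this
  omega

lemma mtfSeq_succ {k : ℕ} (π0 : Equiv.Perm (Fin k)) (M : ℕ → Finset (Fin k)) (t : ℕ) :
    mtfSeq π0 M (t + 1) = moveToFront (mtfSeq π0 M t) (M t) := rfl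

/-- If the index `n` is moved to the front only finitely often while each
index in `A` is moved infinitely often, then eventually every `a ∈ A`
simultaneously has a strictly smaller position than `n`. -/
theorem eventually_all_infinitely_moved_precede {k : ℕ}
    (π0 : Equiv.Perm (Fin k)) (M : ℕ → Finset (Fin k))
    (A : Finset (Fin k)) (n : Fin k) (hnA : n ∉ A)
    (hn : Set.Finite {t : ℕ | n ∈ M t})
    (hA : ∀ a ∈ A, Set.Infinite {t : ℕ | a ∈ M t}) :
    ∃ T : ℕ, ∀ t ≥ T, ∀ a ∈ A,
      ((mtfSeq π0 M t)⁻¹ a : Fin k) < (mtfSeq π0 M t)⁻¹ n := by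
  -- n is not moved after some time T0
  obtain ⟨T0, hT0⟩ : ∃ T0, ∀ t ≥ T0, n ∉ M t := by
    obtain ⟨T0, hT0⟩ := hn.bddAbove
    exact ⟨T0 + 1, fun t ht hmem => by
      have := hT0 hmem; omega⟩
  -- per-element eventual statement
  have key : ∀ a : Fin k, ∃ Ta, a ∈ A → ∀ t ≥ Ta,
      (((mtfSeq π0 M t)⁻¹ a : Fin k) : ℕ) < (((mtfSeq π0 M t)⁻¹ n : Fin k) : ℕ) := by
    intro a
    by_cases haA : a ∈ A
    · obtain ⟨ta, hta_mem, hta_ge⟩ : ∃ ta, a ∈ M ta ∧ T0 ≤ ta := by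
        obtain ⟨ta, hmem, hgt⟩ := (hA a haA).exists_gt T0
        exact ⟨ta, hmem, le_of_lt hgt⟩
      refine ⟨ta + 1, fun _ => ?_⟩
      intro t ht
      induction t with
      | zero => omega
      | succ s ih =>
        rcases Nat.lt_or_ge (s + 1) (ta + 2) with hlt | hge
        · -- s + 1 = ta + 1
          have hs : s = ta := by omega
          subst hs
          rw [mtfSeq_succ]
          exact moveToFront_lt_of_mem _ _ hta_mem (hT0 _ hta_ge)
        · have hprev := ih (by omega)
          rw [mtfSeq_succ]
          have hnM : n ∉ M s := hT0 s (by omega)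
          by_cases haM : a ∈ M s
          · exact moveToFront_lt_of_mem _ _ haM hnM
          · exact moveToFront_lt_of_not_mem _ _ haM hnM hprev
    · exact ⟨0, fun h => absurd h haA⟩
  choose f hf using key
  refine ⟨Finset.univ.sup f, fun t ht a haA => ?_⟩
  have : f a ≤ t := le_trans (Finset.le_sup (Finset.mem_univ a)) ht
  exact hf a haA t this
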